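/- If a graph G contains a substructure S belonging to the family S_k, then Staller can win the Staller-start Maker-Breaker domination game on G in at most k moves, i.e., γ'_SMB(G) ≤ k. -/

import Mathlib

open scoped Classical


/-- `SStar k G VS X` says that the subgraph of `G` induced on the vertex set `VS`,
together with the distinguished vertex set `X ⊆ VS`, is a member of the family
`S_k^*` (defined recursively: `S_1^* = {P_1}` with `X` the single vertex; a member
of `S_{k}^*` for `k ≥ 2` is obtained from disjoint members `S^1 ∈ S_{k-1}^*` and
`S^2 ∈ ∪_{i<k} S_i^*` by joining a new origin vertex `z` to chosen vertices
`x₁ ∈ X(S^1)` and `x₂ ∈ X(S^2)`, with `X = X(S^1) ∪ X(S^2)`). -/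
def SStar {V : Type} : ℕ → SimpleGraph V → Set V → Set V → Prop
  | 0, _, _, _ => False
  | 1, _, VS, X => ∃ x : V, VS = {x} ∧ X = {x}
  | (k+2), G, VS, X => ∃ (z : V) (A B : Set V) (x₁ x₂ : V),
      z ∈ VS ∧ z ∉ X ∧ X ⊆ VS ∧ A ∪ B = VS \ {z} ∧ Disjoint A B ∧
      x₁ ∈ A ∩ X ∧ x₂ ∈ B ∩ X ∧
      (∀ v ∈ VS, G.Adj z v ↔ (v = x₁ ∨ v = x₂)) ∧
      (∀ a ∈ A, ∀ b ∈ B, ¬ G.Adj a b) ∧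
      SStar (k+1) G A (X ∩ A) ∧
      (∃ i, ∃ _ : 1 ≤ i ∧ i ≤ k + 1, SStar i G B (X ∩ B))
termination_by k _ _ _ => k
decreasing_by all_goals omega

/-- The subgraph of `G` induced on `VS` with distinguished set `X` is a member of
the family `S_k = S_k^* \ (S_1 ∪ ⋯ ∪ S_{k-1})`. -/
def SFamilyAt (k : ℕ) {V : Type} (G : SimpleGraph V) (VS X : Set V) : Prop :=
  SStar k G VS X ∧ ∀ i < k, ¬ SStar i G VS X

/-- The graph `G` itself, with distinguished set `X`, is a member of the family `S_k`. -/
def SFamily (k : ℕ) {V : Type} (G : SimpleGraph V) (X : Set V) : Prop :=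
  SFamilyAt k G Set.univ X

/-- `G` contains a substructure from `S_k`: a subgraph (induced on some vertex set
`VS`, with distinguished set `X`) belonging to `S_k` such that every vertex of `X`
has the same degree in the subgraph as in `G`, i.e. all `G`-neighbors of vertices
of `X` lie in `VS`. -/
def HasSubstructure (k : ℕ) {V : Type} (G : SimpleGraph V) : Prop :=
  ∃ VS X : Set V, SFamilyAt k G VS X ∧ ∀ x ∈ X, ∀ w : V, G.Adj x w → w ∈ VS

open scoped Classical

noncomputable section

/-- Minimax value of the Maker–Breaker game on hypergraph with edge set `E`:
`mbVal E t M B` is the minimum number of further moves Maker needs to claim all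
vertices of some hyperedge (Maker has claimed `M`, Breaker has claimed `B`,
`t = true` iff Maker moves next), under optimal play; `⊤` if Maker cannot win. -/
def mbVal {V : Type} [Fintype V] (E : Set (Finset V)) :
    Bool → Finset V → Finset V → ℕ∞
  | true, M, B =>
      if ∃ e ∈ E, e ⊆ M then 0
      else ⨅ v ∈ Finset.univ \ (M ∪ B), (1 + mbVal E false (insert v M) B)
  | false, M, B =>
      if ∃ e ∈ E, e ⊆ M then 0
      else if Finset.univ \ (M ∪ B) = ∅ then ⊤
      else ⨆ v ∈ Finset.univ \ (M ∪ B), mbVal E true M (insert v B)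
termination_by _t M B => (Finset.univ \ (M ∪ B)).card
decreasing_by
  all_goals
    apply Finset.card_lt_card
    rw [Finset.ssubset_iff_of_subset]
    · refine ⟨v, ‹_›, by simp⟩
    · intro x hx
      simp only [Finset.mem_sdiff, Finset.mem_univ, true_and, Finset.mem_union,
        Finset.mem_insert] at hx ⊢
      tauto

/-- The closed neighborhood of `v` as a finset. -/
def closedNbhdFinset {V : Type} [Fintype V] (G : SimpleGraph V) (v : V) : Finset V :=
  Finset.univ.filter (fun w => w = v ∨ G.Adj v w)

/-- The closed neighborhood hypergraph of a graph. -/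
def nbhdHyp {V : Type} [Fintype V] (G : SimpleGraph V) : Set (Finset V) :=
  Set.range (closedNbhdFinset G)

/-- `γ'_SMB(G)`: the number of moves Staller (= Maker on the closed neighborhood
hypergraph, moving first) needs to win the Maker–Breaker domination game on `G`. -/
def gammaSMB' {V : Type} [Fintype V] (G : SimpleGraph V) : ℕ∞ :=
  mbVal (nbhdHyp G) true ∅ ∅

end



lemma mbVal_false_eq_zero {V : Type} [Fintype V] (E : Set (Finset V)) (M B : Finset V)
    (h : ∃ e ∈ E, e ⊆ M) : mbVal E false M B = 0 := by
  rw [mbVal]; simp [h]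

lemma staller_key {V : Type} [Fintype V] (G : SimpleGraph V) :
    ∀ k (VS X : Set V) (M B : Finset V),
      SStar k G VS X →
      (∀ x ∈ X, ∀ w : V, G.Adj x w → w ∈ VS ∨ w ∈ M) →
      (∀ v ∈ VS, v ∉ M ∧ v ∉ B) →
      mbVal (nbhdHyp G) true M B ≤ (k : ℕ∞) := by
  intro k
  induction k using Nat.strong_induction_on with
  | _ k IH =>
  intro VS X M B hS hnb hfree
  match k, hS, IH with
  | 0, hS, IH => rw [SStar] at hS; exact hS.elim
  | 1, hS, IH =>
      rw [SStar] at hS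
      obtain ⟨x, hVS, hX⟩ := hS
      rw [mbVal]
      split_ifs with h0
      · exact zero_le
      · have hxfree := hfree x (by rw [hVS]; rfl)
        have hx : x ∈ Finset.univ \ (M ∪ B) := by
          simp [hxfree.1, hxfree.2]
        refine le_trans (iInf₂_le x hx) ?_
        have hwin : mbVal (nbhdHyp G) false (insert x M) B = 0 := by
          apply mbVal_false_eq_zero
          refine ⟨closedNbhdFinset G x, ⟨x, rfl⟩, ?_⟩
          intro w hw
          simp only [closedNbhdFinset, Finset.mem_filter] at hw
          rcases hw.2 with rfl | hadj
          · exact Finset.mem_insert_self _ _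
          · have := hnb x (by rw [hX]; rfl) w hadj
            rcases this with hwVS | hwM
            · exfalso; rw [hVS] at hwVS
              exact G.ne_of_adj hadj (hwVS.symm)
            · exact Finset.mem_insert_of_mem hwM
        rw [hwin]
        simp
  | (k+2), hS, IH =>
      rw [SStar] at hS
      obtain ⟨z, A, Bs, x₁, x₂, hzVS, hzX, hXVS, hAB, hdisj, hx₁, hx₂, hzadj,
        hnoedge, hSA, i, ⟨hi1, hi2⟩, hSB⟩ := hS
      have hA_sub : A ⊆ VS \ {z} := hAB ▸ Set.subset_union_left
      have hB_sub : Bs ⊆ VS \ {z} := hAB ▸ Set.subset_union_right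
      -- generic side lemma for the neighborhood condition
      have side : ∀ (C D : Set V), C ∪ D = VS \ {z} →
          (∀ a ∈ C, ∀ d ∈ D, ¬ G.Adj a d) →
          ∀ x ∈ X ∩ C, ∀ w : V, G.Adj x w → w ∈ C ∨ w ∈ insert z M := by
        intro C D hCD hnoe x hx w hadj
        rcases hnb x hx.1 w hadj with hwVS | hwM
        · by_cases hwz : w = z
          · right; rw [hwz]; exact Finset.mem_insert_self _ _
          · have : w ∈ C ∪ D := by rw [hCD]; exact ⟨hwVS, hwz⟩
            rcases this with hwC | hwD
            · exact Or.inl hwC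
            · exact absurd hadj (hnoe x hx.2 w hwD)
        · right; exact Finset.mem_insert_of_mem hwM
      have sidefree : ∀ (C : Set V), C ⊆ VS \ {z} → ∀ b : V, b ∉ C →
          ∀ v ∈ C, v ∉ insert z M ∧ v ∉ insert b B := by
        intro C hC b hb v hv
        obtain ⟨hvVS, hvz⟩ := hC hv
        have := hfree v hvVS
        constructor
        · simp only [Finset.mem_insert]
          rintro (rfl | hvM)
          · exact hvz rfl
          · exact this.1 hvM
        · simp only [Finset.mem_insert]
          rintro (rfl | hvB)
          · exact hb hv
          · exact this.2 hvB
      rw [mbVal]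
      split_ifs with h0
      · exact zero_le
      have hzfree := hfree z hzVS
      have hz : z ∈ Finset.univ \ (M ∪ B) := by simp [hzfree.1, hzfree.2]
      refine le_trans (iInf₂_le z hz) ?_
      have hmain : mbVal (nbhdHyp G) false (insert z M) B ≤ ((k+1 : ℕ) : ℕ∞) := by
        rw [mbVal]
        split_ifs with h1 h2
        · exact zero_le
        · exfalso
          obtain ⟨hx₁VS, hx₁z⟩ := hA_sub hx₁.1
          have hfx := hfree x₁ hx₁VS
          have : x₁ ∈ Finset.univ \ (insert z M ∪ B) := by
            simp only [Finset.mem_sdiff, Finset.mem_univ, true_and, Finset.mem_union,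
              Finset.mem_insert, not_or]
            exact ⟨⟨fun h => hx₁z h, hfx.1⟩, hfx.2⟩
          rw [h2] at this
          simp at this
        · apply iSup₂_le
          intro b hb
          by_cases hbA : b ∈ A
          · -- recurse into Bs
            have hbB : b ∉ Bs := Set.disjoint_left.mp hdisj hbA
            have hrec := IH i (by omega) Bs (X ∩ Bs) (insert z M) (insert b B) hSB
              (side Bs A (by rw [Set.union_comm]; exact hAB)
                (fun a ha d hd hadj => hnoedge d hd a ha hadj.symm))
              (sidefree Bs hB_sub b hbB)
            exact le_trans hrec (Nat.cast_le.mpr (by omega))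
          · -- recurse into A
            have hrec := IH (k+1) (by omega) A (X ∩ A) (insert z M) (insert b B) hSA
              (side A Bs hAB hnoedge)
              (sidefree A hA_sub b hbA)
            exact hrec
      calc 1 + mbVal (nbhdHyp G) false (insert z M) B
          ≤ 1 + ((k+1 : ℕ) : ℕ∞) := add_le_add_right hmain 1
        _ = ((k+2 : ℕ) : ℕ∞) := by push_cast; ring

/-- If a graph `G` contains a substructure from the family `S_k`, then Staller
wins the Staller-start Maker–Breaker domination game on `G` in at most `k` moves:
`γ'_SMB(G) ≤ k`. -/
theorem stmt_8 {V : Type} [Fintype V] (G : SimpleGraph V) (k : ℕ) (hk : 1 ≤ k)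
    (h : HasSubstructure k G) :
    gammaSMB' G ≤ (k : ℕ∞) := by
  obtain ⟨VS, X, ⟨hS, _⟩, hdeg⟩ := h
  have := staller_key G k VS X ∅ ∅ hS
    (fun x hx w hw => Or.inl (hdeg x hx w hw))
    (fun v _ => ⟨Finset.notMem_empty v, Finset.notMem_empty v⟩)
  exact this
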